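/- Let G be a finite group with a normal subgroup V such that V is an elementary abelian 2-group, the quotient G/V is an elementary abelian 2-group, and V is of maximal rank in G. Let C_G(V) denote the centralizer of V in G (so V ≤ C_G(V)). Then rank(C_G(V)/V) ≤ 2·rank(V ∩ Z(G)). -/

import Mathlib

set_option maxHeartbeats 1000000

/-- A subgroup is an elementary abelian 2-group: every element squares to the
identity (such a subgroup is automatically abelian). -/
def IsElemAbelian2 {G : Type*} [Group G] (A : Subgroup G) : Prop :=
  (∀ a ∈ A, a * a = 1) ∧ ∀ a ∈ A, ∀ b ∈ A, a * b = b * a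

/-- A subgroup `V` of `G` has maximal rank if every elementary abelian
2-subgroup `A` of `G` satisfies `|A| ≤ |V|`. -/
def IsMaximalRank2 {G : Type*} [Group G] (V : Subgroup G) : Prop :=
  ∀ A : Subgroup G, IsElemAbelian2 A → Nat.card A ≤ Nat.card V


open MvPolynomial QuadraticMap

private lemma zmod2_mul_self (a : ZMod 2) : a * a = a := by fin_cases a <;> rfl

lemma quad_aniso {M N : Type*} [AddCommGroup M] [AddCommGroup N]
    [Module (ZMod 2) M] [Module (ZMod 2) N] [Finite M] [Finite N]
    (Q : QuadraticMap (ZMod 2) M N) (hQ : ∀ x, Q x = 0 → x = 0) :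
    Module.finrank (ZMod 2) M ≤ 2 * Module.finrank (ZMod 2) N := by
  have : Module.Finite (ZMod 2) M := Module.Finite.of_finite
  have : Module.Finite (ZMod 2) N := Module.Finite.of_finite
  set r := Module.finrank (ZMod 2) M with hr
  set n := Module.finrank (ZMod 2) N with hn
  by_contra hlt
  push_neg at hlt
  let bM : Module.Basis (Fin r) (ZMod 2) M := Module.finBasis (ZMod 2) M
  let bN : Module.Basis (Fin n) (ZMod 2) N := Module.finBasis (ZMod 2) N
  let ℓ : Fin n → (N →ₗ[ZMod 2] ZMod 2) := fun t =>
    (Finsupp.lapply t) ∘ₗ (bN.repr : N →ₗ[ZMod 2] (Fin n →₀ ZMod 2))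
  classical
  let P : Fin n → MvPolynomial (Fin r) (ZMod 2) := fun t =>
    (∑ i, C (ℓ t (Q (bM i))) * X i) +
      ∑ ij ∈ Finset.univ.sym2.filter (fun ij => ¬ ij.IsDiag),
        Sym2.lift ⟨fun i j => C (ℓ t (polar Q (bM i) (bM j))) * (X i * X j),
          fun i j => by dsimp only; rw [polar_comm]; ring⟩ ij
  -- degree bound
  have hdeg : ∀ t, (P t).totalDegree ≤ 2 := by
    intro t
    apply le_trans (totalDegree_add _ _)
    apply max_le
    · apply le_trans (totalDegree_finset_sum _ _)
      apply Finset.sup_le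
      intro i _
      apply le_trans (totalDegree_mul _ _)
      simp [totalDegree_X]
    · apply le_trans (totalDegree_finset_sum _ _)
      apply Finset.sup_le
      intro ij _
      induction ij using Sym2.inductionOn with
      | hf i j =>
        simp only [Sym2.lift_mk]
        apply le_trans (totalDegree_mul _ _)
        have h2 : (X i * X j : MvPolynomial (Fin r) (ZMod 2)).totalDegree ≤ 2 := by
          apply le_trans (totalDegree_mul _ _)
          simp [totalDegree_X]
        have h1 : (C (ℓ t (polar Q (bM i) (bM j))) :
            MvPolynomial (Fin r) (ZMod 2)).totalDegree = 0 := totalDegree_C _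
        omega
  -- evaluation
  have heval : ∀ (x : Fin r → ZMod 2) t,
      eval x (P t) = ℓ t (Q (∑ i, x i • bM i)) := by
    intro x t
    have hmsum := Q.map_sum (Finset.univ : Finset (Fin r)) (fun i => x i • bM i)
    rw [hmsum, map_add, map_sum, map_sum]
    simp only [P, map_add, map_sum, eval_mul, eval_C, eval_X]
    congr 1
    · apply Finset.sum_congr rfl
      intro i _
      rw [QuadraticMap.map_smul, zmod2_mul_self, LinearMap.map_smul, smul_eq_mul, mul_comm]
    · apply Finset.sum_congr rfl
      intro ij _
      induction ij using Sym2.inductionOn with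
      | hf i j =>
        simp only [Sym2.lift_mk, eval_mul, eval_C, eval_X, Sym2.map_mk, polarSym2_sym2Mk]
        rw [polar_smul_left, polar_smul_right, LinearMap.map_smul, LinearMap.map_smul,
          smul_eq_mul, smul_eq_mul]
        ring
  -- Chevalley-Warning
  have hcw : (2 : ℕ) ∣ Fintype.card { x : Fin r → ZMod 2 // ∀ t, eval x (P t) = 0 } := by
    have hcw' := char_dvd_card_solutions_of_fintype_sum_lt (K := ZMod 2) (σ := Fin r)
      (ι := Fin n) 2 (f := P) ?_
    · convert hcw' using 2
    calc (∑ t : Fin n, (P t).totalDegree) ≤ ∑ t : Fin n, 2 :=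
          Finset.sum_le_sum fun t _ => hdeg t
      _ = 2 * n := by simp [mul_comm]
      _ < Fintype.card (Fin r) := by simpa using hlt
  -- but solution set is exactly {0}
  have hsol : ∀ x : Fin r → ZMod 2, (∀ t, eval x (P t) = 0) ↔ x = 0 := by
    intro x
    constructor
    · intro h
      have hQ0 : Q (∑ i, x i • bM i) = 0 := by
        have hrepr : bN.repr (Q (∑ i, x i • bM i)) = 0 := by
          ext t
          simpa [ℓ] using (heval x t).symm.trans (h t)
        exact (LinearEquiv.map_eq_zero_iff bN.repr).mp hrepr
      have hx0 : (∑ i, x i • bM i) = 0 := hQ _ hQ0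
      funext i
      exact Fintype.linearIndependent_iff.mp bM.linearIndependent x hx0 i
    · intro h
      intro t
      rw [heval]
      simp [h, QuadraticMap.map_zero]
  have hcard : Fintype.card { x : Fin r → ZMod 2 // ∀ t, eval x (P t) = 0 } = 1 := by
    rw [Fintype.card_congr (Equiv.subtypeEquivRight hsol)]
    simp
  rw [hcard] at hcw
  norm_num at hcw

lemma key {H Z : Type*} [Group H] [Group Z] [Finite H] [Finite Z]
    (hH : ∀ h : H, h * h = 1) (hZ : ∀ z : Z, z * z = 1)
    (hZc : ∀ a b : Z, a * b = b * a)
    (q : H → Z) (b : H → H → Z)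
    (hq : ∀ h k, q (h * k) = q h * q k * b h k)
    (hbl : ∀ h h' k, b (h * h') k = b h k * b h' k)
    (hbr : ∀ h k k', b h (k * k') = b h k * b h k')
    (haniso : ∀ h, q h = 1 → h = 1)
    {rr nn : ℕ} (hrH : Nat.card H = 2 ^ rr) (hnZ : Nat.card Z = 2 ^ nn) :
    rr ≤ 2 * nn := by
  have hinv : ∀ h : H, h⁻¹ = h := fun h => inv_eq_of_mul_eq_one_right (hH h)
  have hcomm : ∀ a c : H, a * c = c * a := by
    intro a c
    calc a * c = (a * c)⁻¹ := (hinv _).symm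
      _ = c⁻¹ * a⁻¹ := mul_inv_rev _ _
      _ = c * a := by rw [hinv, hinv]
  letI : CommGroup H := { (inferInstance : Group H) with mul_comm := hcomm }
  letI : CommGroup Z := { (inferInstance : Group Z) with mul_comm := hZc }
  have hb1l : ∀ k, b 1 k = 1 := by
    intro k
    have h1 : b 1 k * b 1 k = b 1 k * 1 := by
      rw [mul_one, ← hbl 1 1 k, one_mul]
    exact mul_left_cancel h1
  have hb1r : ∀ h, b h 1 = 1 := by
    intro h
    have h1 : b h 1 * b h 1 = b h 1 * 1 := by
      rw [mul_one, ← hbr h 1 1, one_mul]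
    exact mul_left_cancel h1
  have hq1 : q 1 = 1 := by
    have h1 := hq 1 1
    rw [one_mul, hb1l, mul_one] at h1
    exact (mul_left_cancel (a := q 1) (by rw [mul_one]; exact h1)).symm
  -- module structure
  letI : Module (ZMod 2) (Additive H) := AddCommGroup.zmodModule (by
    intro x
    rw [two_smul]
    exact hH (Additive.toMul x))
  letI : Module (ZMod 2) (Additive Z) := AddCommGroup.zmodModule (by
    intro x
    rw [two_smul]
    exact hZ (Additive.toMul x))
  have hsmul_cases : ∀ (a : ZMod 2), a = 0 ∨ a = 1 := by decide
  -- the bilinear companion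
  let B : LinearMap.BilinMap (ZMod 2) (Additive H) (Additive Z) :=
    LinearMap.mk₂ (ZMod 2)
      (fun x y => Additive.ofMul (b (Additive.toMul x) (Additive.toMul y)))
      (fun m₁ m₂ nt => hbl m₁ m₂ nt)
      (fun c m nt => by
        rcases hsmul_cases c with h | h <;> subst h
        · simp only [zero_smul]
          exact congrArg Additive.ofMul (hb1l _)
        · rw [one_smul, one_smul])
      (fun m n₁ n₂ => hbr m n₁ n₂)
      (fun c m nt => by
        rcases hsmul_cases c with h | h <;> subst h
        · simp only [zero_smul]
          exact congrArg Additive.ofMul (hb1r _)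
        · rw [one_smul, one_smul])
  let Qm : QuadraticMap (ZMod 2) (Additive H) (Additive Z) :=
    { toFun := fun x => Additive.ofMul (q (Additive.toMul x))
      toFun_smul := by
        intro a x
        rcases hsmul_cases a with h | h <;> subst h
        · simp only [zero_smul, zero_mul]
          exact congrArg Additive.ofMul hq1
        · rw [one_smul, one_mul, one_smul]
      exists_companion' := ⟨B, fun x y => hq (Additive.toMul x) (Additive.toMul y)⟩ }
  have haniso' : ∀ x : Additive H, Qm x = 0 → x = 0 := fun x hx => haniso _ hx
  have hle := quad_aniso Qm haniso'
  -- cards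
  have hcardM : Nat.card (Additive H) = 2 ^ (Module.finrank (ZMod 2) (Additive H)) := by
    have : Module.Finite (ZMod 2) (Additive H) := Module.Finite.of_finite
    have : Fintype (Additive H) := Fintype.ofFinite _
    rw [Nat.card_eq_fintype_card, Module.card_eq_pow_finrank (K := ZMod 2), ZMod.card]
  have hcardN : Nat.card (Additive Z) = 2 ^ (Module.finrank (ZMod 2) (Additive Z)) := by
    have : Module.Finite (ZMod 2) (Additive Z) := Module.Finite.of_finite
    have : Fintype (Additive Z) := Fintype.ofFinite _
    rw [Nat.card_eq_fintype_card, Module.card_eq_pow_finrank (K := ZMod 2), ZMod.card]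
  have e1 : Nat.card (Additive H) = Nat.card H := Nat.card_congr Additive.toMul
  have e2 : Nat.card (Additive Z) = Nat.card Z := Nat.card_congr Additive.toMul
  have hr2 : (2:ℕ) ^ rr = 2 ^ Module.finrank (ZMod 2) (Additive H) := by
    rw [← hrH, ← e1, hcardM]
  have hn2 : (2:ℕ) ^ nn = 2 ^ Module.finrank (ZMod 2) (Additive Z) := by
    rw [← hnZ, ← e2, hcardN]
  have hr' : rr = Module.finrank (ZMod 2) (Additive H) :=
    Nat.pow_right_injective le_rfl hr2
  have hn' : nn = Module.finrank (ZMod 2) (Additive Z) :=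
    Nat.pow_right_injective le_rfl hn2
  rw [hr', hn']
  exact hle

section Aux
variable {G : Type*} [Group G] (V : Subgroup G)

lemma sqV_mem [V.Normal] (hW : ∀ w : G ⧸ V, w * w = 1) (g : G) : g * g ∈ V := by
  have := hW (g : G ⧸ V)
  rwa [← QuotientGroup.mk_mul, QuotientGroup.eq_one_iff] at this

lemma commV_mem [V.Normal] (hW : ∀ w : G ⧸ V, w * w = 1) (g h : G) :
    g⁻¹ * h⁻¹ * g * h ∈ V := by
  have hinv : ∀ w : G ⧸ V, w⁻¹ = w := fun w => inv_eq_of_mul_eq_one_right (hW w)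
  have hcomm : ∀ a b : G ⧸ V, a * b = b * a := by
    intro a b
    calc a * b = (a * b)⁻¹ := (hinv _).symm
      _ = b⁻¹ * a⁻¹ := mul_inv_rev _ _
      _ = b * a := by rw [hinv, hinv]
  rw [← QuotientGroup.eq_one_iff]
  have hc : ((g⁻¹ * h⁻¹ * g * h : G) : G ⧸ V)
      = ((g : G ⧸ V)⁻¹ * (h : G ⧸ V)⁻¹) * ((g : G ⧸ V) * (h : G ⧸ V)) := by
    simp [mul_assoc]
  rw [hc, hcomm (g : G ⧸ V) (h : G ⧸ V)]
  group

lemma sq_one_mem_V [Finite G] (hV : IsElemAbelian2 V) (hmax : IsMaximalRank2 V)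
    {c : G} (hc : c ∈ Subgroup.centralizer (V : Set G)) (hc2 : c * c = 1) : c ∈ V := by
  by_contra hcV
  have hcent : ∀ v ∈ V, v * c = c * v := Subgroup.mem_centralizer_iff.mp hc
  let A : Subgroup G :=
    { carrier := {g | g ∈ V ∨ c * g ∈ V}
      one_mem' := Or.inl (one_mem V)
      mul_mem' := by
        rintro a b (ha | ha) (hb | hb)
        · exact Or.inl (mul_mem ha hb)
        · right
          have h1 : c * (a * b) = a * (c * b) := by
            rw [← mul_assoc, ← hcent a ha, mul_assoc]
          rw [h1]; exact mul_mem ha hb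
        · right
          rw [← mul_assoc]; exact mul_mem ha hb
        · left
          have h1 : a * b = (c * a) * (c * b) := by
            calc a * b = (c * (c * a)) * b := by rw [← mul_assoc, hc2, one_mul]
              _ = ((c * a) * c) * b := by rw [hcent (c * a) ha]
              _ = (c * a) * (c * b) := by rw [mul_assoc]
          rw [h1]; exact mul_mem ha hb
      inv_mem' := by
        rintro a (ha | ha)
        · exact Or.inl (inv_mem ha)
        · right
          have h1 : c * a⁻¹ = (c * a)⁻¹ := by
            have h2 : a = c * (c * a) := by rw [← mul_assoc, hc2, one_mul]
            calc c * a⁻¹ = c * (c * (c * a))⁻¹ := by rw [← h2]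
              _ = c * ((c * a)⁻¹ * c⁻¹) := by rw [mul_inv_rev]
              _ = (c * (c * a)⁻¹) * c⁻¹ := by rw [mul_assoc]
              _ = ((c * a)⁻¹ * c) * c⁻¹ := by rw [hcent (c * a)⁻¹ (inv_mem ha)]
              _ = (c * a)⁻¹ := by group
          rw [h1]; exact inv_mem ha }
  have hmemA : ∀ g : G, g ∈ A ↔ (g ∈ V ∨ c * g ∈ V) := fun g => Iff.rfl
  have habel : IsElemAbelian2 A := by
    constructor
    · rintro a (ha | ha)
      · exact hV.1 a ha
      · have h2 : a = c * (c * a) := by rw [← mul_assoc, hc2, one_mul]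
        calc a * a = (c * (c * a)) * (c * (c * a)) := by rw [← h2]
          _ = c * ((c * a) * c) * (c * a) := by group
          _ = c * (c * (c * a)) * (c * a) := by rw [hcent (c * a) ha]
          _ = (c * c) * ((c * a) * (c * a)) := by group
          _ = 1 := by rw [hc2, one_mul, hV.1 _ ha]
    · rintro a (ha | ha) b (hb | hb)
      · exact hV.2 a ha b hb
      · have h2 : b = c * (c * b) := by rw [← mul_assoc, hc2, one_mul]
        calc a * b = a * (c * (c * b)) := by rw [← h2]
          _ = (a * c) * (c * b) := by rw [mul_assoc]
          _ = (c * a) * (c * b) := by rw [hcent a ha]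
          _ = c * (a * (c * b)) := by rw [mul_assoc]
          _ = c * ((c * b) * a) := by rw [hV.2 a ha (c * b) hb]
          _ = (c * (c * b)) * a := by rw [← mul_assoc, mul_assoc]
          _ = b * a := by rw [← h2]
      · have h2 : a = c * (c * a) := by rw [← mul_assoc, hc2, one_mul]
        calc a * b = (c * (c * a)) * b := by rw [← h2]
          _ = c * ((c * a) * b) := by rw [mul_assoc]
          _ = c * (b * (c * a)) := by rw [hV.2 (c * a) ha b hb]
          _ = (c * b) * (c * a) := by rw [← mul_assoc]
          _ = (b * c) * (c * a) := by rw [hcent b hb]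
          _ = b * (c * (c * a)) := by group
          _ = b * a := by rw [← h2]
      · have h2 : a = c * (c * a) := by rw [← mul_assoc, hc2, one_mul]
        have h3 : b = c * (c * b) := by rw [← mul_assoc, hc2, one_mul]
        calc a * b = (c * (c * a)) * (c * (c * b)) := by rw [← h2, ← h3]
          _ = c * ((c * a) * c) * (c * b) := by group
          _ = c * (c * (c * a)) * (c * b) := by rw [hcent (c * a) ha]
          _ = (c * c) * ((c * a) * (c * b)) := by group
          _ = (c * a) * (c * b) := by rw [hc2, one_mul]
          _ = (c * b) * (c * a) := hV.2 _ ha _ hb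
          _ = (c * c) * ((c * b) * (c * a)) := by rw [hc2, one_mul]
          _ = c * (c * (c * b)) * (c * a) := by group
          _ = c * ((c * b) * c) * (c * a) := by rw [hcent (c * b) hb]
          _ = (c * (c * b)) * (c * (c * a)) := by group
          _ = b * a := by rw [← h2, ← h3]
  -- injection V × Bool → A
  let f : V × Bool → A := fun p =>
    if p.2 then ⟨c * ↑p.1, Or.inr (by rw [← mul_assoc, hc2, one_mul]; exact p.1.2)⟩
    else ⟨↑p.1, Or.inl p.1.2⟩
  have hfinj : Function.Injective f := by
    rintro ⟨v, bv⟩ ⟨w, bw⟩ heq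
    cases bv <;> cases bw <;>
      simp only [f, if_true, if_false, Bool.false_eq_true, Subtype.mk_eq_mk] at heq
    · exact Prod.ext (Subtype.ext heq) rfl
    · exfalso
      apply hcV
      have : c = ↑v * (↑w)⁻¹ := by rw [heq]; group
      rw [this]; exact mul_mem v.2 (inv_mem w.2)
    · exfalso
      apply hcV
      have : c = ↑w * (↑v)⁻¹ := by rw [← heq]; group
      rw [this]; exact mul_mem w.2 (inv_mem v.2)
    · exact Prod.ext (Subtype.ext (mul_left_cancel heq)) rfl
  have hle := hmax A habel
  have hinj := Nat.card_le_card_of_injective f hfinj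
  have hcards : Nat.card (V × Bool) = 2 * Nat.card V := by
    rw [Nat.card_prod]; simp [mul_comm]
  have hpos : 0 < Nat.card V := Nat.card_pos
  omega

end Aux

section Aux2
variable {G : Type*} [Group G] (V : Subgroup G)


variable [V.Normal]

-- squares of centralizer elements are central
lemma centSq (hV : IsElemAbelian2 V) (hW : ∀ w : G ⧸ V, w * w = 1) {c : G} (hc : c ∈ Subgroup.centralizer (V : Set G)) :
    c * c ∈ Subgroup.center G := by
  rw [Subgroup.mem_center_iff]
  intro g
  have hcent : ∀ v ∈ V, v * c = c * v := Subgroup.mem_centralizer_iff.mp hc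
  have hv : c⁻¹ * g * c * g⁻¹ ∈ V := by
    have := commV_mem V hW c g⁻¹
    rwa [inv_inv] at this
  set v := c⁻¹ * g * c * g⁻¹ with hvdef
  have hvv : v * v = 1 := hV.1 v hv
  have hgcg : g * c * g⁻¹ = c * v := by rw [hvdef]; group
  have key : g * (c * c) * g⁻¹ = c * c := by
    calc g * (c * c) * g⁻¹ = (g * c * g⁻¹) * (g * c * g⁻¹) := by group
      _ = (c * v) * (c * v) := by rw [hgcg]
      _ = c * (v * c) * v := by group
      _ = c * (c * v) * v := by rw [hcent v hv]
      _ = (c * c) * (v * v) := by group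
      _ = c * c := by rw [hvv, mul_one]
  calc g * (c * c) = (g * (c * c) * g⁻¹) * g := by group
    _ = (c * c) * g := by rw [key]

-- the λ-identity: (cd)² = c² d² u with u = d⁻¹c⁻¹dc
lemma sq_mul_eq (hV : IsElemAbelian2 V) (hW : ∀ w : G ⧸ V, w * w = 1) {c d : G} (hc : c ∈ Subgroup.centralizer (V : Set G))
    (hd : d ∈ Subgroup.centralizer (V : Set G)) :
    (c * d) * (c * d) = (c * c) * (d * d) * (d⁻¹ * c⁻¹ * d * c) := by
  have hdcent : ∀ v ∈ V, v * d = d * v := Subgroup.mem_centralizer_iff.mp hd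
  have hu : d⁻¹ * c⁻¹ * d * c ∈ V := commV_mem V hW d c
  set u := d⁻¹ * c⁻¹ * d * c with hudef
  have h1 : d * c = c * d * u := by rw [hudef]; group
  calc (c * d) * (c * d) = c * (d * c) * d := by group
    _ = c * (c * d * u) * d := by rw [h1]
    _ = (c * c) * d * (u * d) := by group
    _ = (c * c) * d * (d * u) := by rw [hdcent u hu]
    _ = (c * c) * (d * d) * u := by group

-- u is central
lemma comm_central (hV : IsElemAbelian2 V) (hW : ∀ w : G ⧸ V, w * w = 1) {c d : G} (hc : c ∈ Subgroup.centralizer (V : Set G))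
    (hd : d ∈ Subgroup.centralizer (V : Set G)) :
    d⁻¹ * c⁻¹ * d * c ∈ Subgroup.center G := by
  have hcd : c * d ∈ Subgroup.centralizer (V : Set G) := mul_mem hc hd
  have h1 : d⁻¹ * c⁻¹ * d * c
      = ((d * d)⁻¹ * ((c * c)⁻¹ * ((c * d) * (c * d)))) := by
    rw [sq_mul_eq V hV hW hc hd]; group
  rw [h1]
  exact mul_mem (inv_mem (centSq V hV hW hd))
    (mul_mem (inv_mem (centSq V hV hW hc)) (centSq V hV hW hcd))

-- biadditivity of u in the first slot (the `c` slot)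
lemma comm_add_left (hV : IsElemAbelian2 V) (hW : ∀ w : G ⧸ V, w * w = 1) {c c' d : G} (hc : c ∈ Subgroup.centralizer (V : Set G))
    (hc' : c' ∈ Subgroup.centralizer (V : Set G))
    (hd : d ∈ Subgroup.centralizer (V : Set G)) :
    d⁻¹ * (c * c')⁻¹ * d * (c * c')
      = (d⁻¹ * c⁻¹ * d * c) * (d⁻¹ * c'⁻¹ * d * c') := by
  set u := d⁻¹ * c⁻¹ * d * c with hudef
  set u' := d⁻¹ * c'⁻¹ * d * c' with hu'def
  have hcu : ∀ g : G, g * u = u * g := fun g =>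
    (Subgroup.mem_center_iff.mp (comm_central V hV hW hc hd) g)
  have hcu' : ∀ g : G, g * u' = u' * g := fun g =>
    (Subgroup.mem_center_iff.mp (comm_central V hV hW hc' hd) g)
  have h1 : d * c = c * d * u := by rw [hudef]; group
  have h1' : d * c' = c' * d * u' := by rw [hu'def]; group
  have step : d * (c * c') = (c * c') * d * (u' * u) := by
    calc d * (c * c') = (d * c) * c' := by group
      _ = (c * d * u) * c' := by rw [h1]
      _ = c * d * (u * c') := by group
      _ = c * d * (c' * u) := by rw [← hcu c']
      _ = c * (d * c') * u := by group
      _ = c * (c' * d * u') * u := by rw [h1']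
      _ = (c * c') * d * (u' * u) := by group
  calc d⁻¹ * (c * c')⁻¹ * d * (c * c')
      = d⁻¹ * (c * c')⁻¹ * (d * (c * c')) := by group
    _ = d⁻¹ * (c * c')⁻¹ * ((c * c') * d * (u' * u)) := by rw [step]
    _ = u' * u := by group
    _ = u * u' := by rw [hcu u']

-- biadditivity in the second slot (the `d` slot)
lemma comm_add_right (hV : IsElemAbelian2 V) (hW : ∀ w : G ⧸ V, w * w = 1) {c d d' : G} (hc : c ∈ Subgroup.centralizer (V : Set G))
    (hd : d ∈ Subgroup.centralizer (V : Set G))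
    (hd' : d' ∈ Subgroup.centralizer (V : Set G)) :
    (d * d')⁻¹ * c⁻¹ * (d * d') * c
      = (d⁻¹ * c⁻¹ * d * c) * (d'⁻¹ * c⁻¹ * d' * c) := by
  set u := d⁻¹ * c⁻¹ * d * c with hudef
  set u' := d'⁻¹ * c⁻¹ * d' * c with hu'def
  have hcu : ∀ g : G, g * u = u * g := fun g =>
    (Subgroup.mem_center_iff.mp (comm_central V hV hW hc hd) g)
  have h1 : d * c = c * d * u := by rw [hudef]; group
  have h1' : d' * c = c * d' * u' := by rw [hu'def]; group
  have step : (d * d') * c = c * (d * d') * (u * u') := by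
    calc (d * d') * c = d * (d' * c) := by group
      _ = d * (c * d' * u') := by rw [h1']
      _ = (d * c) * (d' * u') := by group
      _ = (c * d * u) * (d' * u') := by rw [h1]
      _ = c * d * (u * d') * u' := by group
      _ = c * d * (d' * u) * u' := by rw [← hcu d']
      _ = c * (d * d') * (u * u') := by group
  calc (d * d')⁻¹ * c⁻¹ * (d * d') * c
      = (d * d')⁻¹ * c⁻¹ * ((d * d') * c) := by group
    _ = (d * d')⁻¹ * c⁻¹ * (c * (d * d') * (u * u')) := by rw [step]
    _ = u * u' := by group

end Aux2

section Conj
variable {G : Type*} [Group G] (V : Subgroup G) [V.Normal]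

lemma sq_coset (hV : IsElemAbelian2 V) {a v : G}
    (ha : a ∈ Subgroup.centralizer (V : Set G)) (hv : v ∈ V) :
    (a * v) * (a * v) = a * a := by
  have hva : v * a = a * v := Subgroup.mem_centralizer_iff.mp ha v hv
  calc (a * v) * (a * v) = a * (v * a) * v := by group
    _ = a * (a * v) * v := by rw [hva]
    _ = (a * a) * (v * v) := by group
    _ = a * a := by rw [hV.1 v hv, mul_one]

lemma comm_conj_left (hV : IsElemAbelian2 V) (hW : ∀ w : G ⧸ V, w * w = 1) {a d v : G}
    (ha : a ∈ Subgroup.centralizer (V : Set G)) (hd : d ∈ Subgroup.centralizer (V : Set G))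
    (hv : v ∈ V) :
    d⁻¹ * (a * v)⁻¹ * d * (a * v) = d⁻¹ * a⁻¹ * d * a := by
  have hcu : ∀ g : G, g * (d⁻¹ * a⁻¹ * d * a) = (d⁻¹ * a⁻¹ * d * a) * g := fun g =>
    Subgroup.mem_center_iff.mp (comm_central V hV hW ha hd) g
  have hvd : v * d = d * v := Subgroup.mem_centralizer_iff.mp hd v hv
  have h2 : d⁻¹ * v⁻¹ = v⁻¹ * d⁻¹ := by
    have := congrArg (fun x => x⁻¹) hvd
    simpa [mul_inv_rev] using this
  calc d⁻¹ * (a * v)⁻¹ * d * (a * v)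
      = (d⁻¹ * v⁻¹) * (a⁻¹ * d * (a * v)) := by group
    _ = (v⁻¹ * d⁻¹) * (a⁻¹ * d * (a * v)) := by rw [h2]
    _ = v⁻¹ * (d⁻¹ * a⁻¹ * d * a) * v := by group
    _ = ((d⁻¹ * a⁻¹ * d * a) * v⁻¹) * v := by rw [hcu v⁻¹]
    _ = d⁻¹ * a⁻¹ * d * a := by group

lemma comm_conj_right (hV : IsElemAbelian2 V) (hW : ∀ w : G ⧸ V, w * w = 1) {a d w : G}
    (ha : a ∈ Subgroup.centralizer (V : Set G)) (hd : d ∈ Subgroup.centralizer (V : Set G))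
    (hw : w ∈ V) :
    (d * w)⁻¹ * a⁻¹ * (d * w) * a = d⁻¹ * a⁻¹ * d * a := by
  have hcu : ∀ g : G, g * (d⁻¹ * a⁻¹ * d * a) = (d⁻¹ * a⁻¹ * d * a) * g := fun g =>
    Subgroup.mem_center_iff.mp (comm_central V hV hW ha hd) g
  have hwa : w * a = a * w := Subgroup.mem_centralizer_iff.mp ha w hw
  calc (d * w)⁻¹ * a⁻¹ * (d * w) * a
      = w⁻¹ * (d⁻¹ * a⁻¹ * d) * (w * a) := by group
    _ = w⁻¹ * (d⁻¹ * a⁻¹ * d) * (a * w) := by rw [hwa]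
    _ = (w⁻¹ * (d⁻¹ * a⁻¹ * d * a)) * w := by group
    _ = ((d⁻¹ * a⁻¹ * d * a) * w⁻¹) * w := by rw [hcu w⁻¹]
    _ = d⁻¹ * a⁻¹ * d * a := by group

end Conj

theorem stmt3 (G : Type*) [Group G] [Finite G] (V : Subgroup G) [V.Normal]
    (hV : IsElemAbelian2 V) (hmax : IsMaximalRank2 V)
    (hW : ∀ w : G ⧸ V, w * w = 1)
    (nZ rC : ℕ)
    (hnZ : Nat.card (V ⊓ Subgroup.center G : Subgroup G) = 2 ^ nZ)
    -- rank of C_G(V)/V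
    (hrC : Nat.card
        (Subgroup.centralizer (V : Set G) ⧸
          V.subgroupOf (Subgroup.centralizer (V : Set G))) = 2 ^ rC) :
    rC ≤ 2 * nZ := by
  classical
  set Cg := Subgroup.centralizer (V : Set G) with hCgdef
  set Zs := V ⊓ Subgroup.center G with hZsdef
  set N := V.subgroupOf Cg with hNdef
  -- the quadratic map on representatives
  have hQZmem : ∀ c : ↥Cg, (c : G) * c ∈ Zs :=
    fun c => Subgroup.mem_inf.mpr ⟨sqV_mem V hW c, centSq V hV hW c.2⟩
  let QZ : ↥Cg → ↥Zs := fun c => ⟨(c : G) * c, hQZmem c⟩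
  have hBZmem : ∀ c d : ↥Cg, (d : G)⁻¹ * (c : G)⁻¹ * d * c ∈ Zs :=
    fun c d => Subgroup.mem_inf.mpr ⟨commV_mem V hW d c, comm_central V hV hW c.2 d.2⟩
  let BZ : ↥Cg → ↥Cg → ↥Zs := fun c d => ⟨(d : G)⁻¹ * (c : G)⁻¹ * d * c, hBZmem c d⟩
  -- descend to the quotient
  have hrel : ∀ a b : ↥Cg, (QuotientGroup.leftRel N) a b → ((a : G)⁻¹ * b ∈ V ∧ b = a * (a⁻¹ * b)) := by
    intro a b hab
    have h1 : a⁻¹ * b ∈ N := QuotientGroup.leftRel_apply.mp hab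
    exact ⟨Subgroup.mem_subgroupOf.mp h1, by group⟩
  let q : (Cg ⧸ N) → ↥Zs := fun h => Quotient.liftOn' h QZ (by
    intro a b hab
    obtain ⟨hv, hb⟩ := hrel a b hab
    apply Subtype.ext
    show (a : G) * a = (b : G) * b
    have hbG : (b : G) = (a : G) * ((a : G)⁻¹ * b) := by group
    rw [hbG, sq_coset V hV a.2 hv])
  let b' : (Cg ⧸ N) → (Cg ⧸ N) → ↥Zs := fun h k =>
    Quotient.liftOn₂' h k BZ (by
      intro a₁ a₂ b₁ b₂ h1 h2
      obtain ⟨hv1, hb1⟩ := hrel a₁ b₁ h1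
      obtain ⟨hv2, hb2⟩ := hrel a₂ b₂ h2
      apply Subtype.ext
      symm
      show (b₂ : G)⁻¹ * (b₁ : G)⁻¹ * b₂ * b₁ = (a₂ : G)⁻¹ * (a₁ : G)⁻¹ * a₂ * a₁
      have hg1 : (b₁ : G) = (a₁ : G) * ((a₁ : G)⁻¹ * b₁) := by group
      have hg2 : (b₂ : G) = (a₂ : G) * ((a₂ : G)⁻¹ * b₂) := by group
      rw [hg1, hg2,
        comm_conj_left V hV hW a₁.2 (by rw [← hg2]; exact b₂.2) hv1,
        comm_conj_right V hV hW a₁.2 a₂.2 hv2])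
  -- mk lemmas
  have hq_mk : ∀ c : ↥Cg, q (QuotientGroup.mk c) = QZ c := fun c => rfl
  have hb_mk : ∀ c d : ↥Cg, b' (QuotientGroup.mk c) (QuotientGroup.mk d) = BZ c d :=
    fun c d => rfl
  have hmul_mk : ∀ c d : ↥Cg,
      (QuotientGroup.mk c : Cg ⧸ N) * QuotientGroup.mk d = QuotientGroup.mk (c * d) :=
    fun c d => (QuotientGroup.mk_mul N c d).symm
  -- hypotheses for `key`
  have : Finite (Cg ⧸ N) := Quotient.finite _
  have hH : ∀ h : Cg ⧸ N, h * h = 1 := by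
    intro h
    refine Quotient.inductionOn' h ?_
    intro c
    show (QuotientGroup.mk c : Cg ⧸ N) * QuotientGroup.mk c = 1
    rw [hmul_mk]
    show (QuotientGroup.mk (c * c) : Cg ⧸ N) = 1
    rw [QuotientGroup.eq_one_iff]
    exact Subgroup.mem_subgroupOf.mpr (by simpa using sqV_mem V hW (c : G))
  have hZ : ∀ z : ↥Zs, z * z = 1 := by
    intro z
    apply Subtype.ext
    exact hV.1 (z : G) (Subgroup.mem_inf.mp z.2).1
  have hZc : ∀ a b : ↥Zs, a * b = b * a := by
    intro a b
    apply Subtype.ext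
    exact Subgroup.mem_center_iff.mp (Subgroup.mem_inf.mp b.2).2 (a : G)
  have hq : ∀ h k, q (h * k) = q h * q k * b' h k := by
    intro h k
    refine Quotient.inductionOn₂' h k ?_
    intro c d
    show q ((QuotientGroup.mk c : Cg ⧸ N) * QuotientGroup.mk d)
        = q (QuotientGroup.mk c) * q (QuotientGroup.mk d)
          * b' (QuotientGroup.mk c) (QuotientGroup.mk d)
    rw [hmul_mk, hq_mk, hq_mk, hq_mk, hb_mk]
    apply Subtype.ext
    show ((c : G) * d) * ((c : G) * d)
        = (((c : G) * c) * ((d : G) * d)) * ((d : G)⁻¹ * (c : G)⁻¹ * d * c)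
    exact sq_mul_eq V hV hW c.2 d.2
  have hbl : ∀ h h' k, b' (h * h') k = b' h k * b' h' k := by
    intro h h' k
    refine Quotient.inductionOn₃' h h' k ?_
    intro c c' d
    show b' ((QuotientGroup.mk c : Cg ⧸ N) * QuotientGroup.mk c') (QuotientGroup.mk d)
        = b' (QuotientGroup.mk c) (QuotientGroup.mk d)
          * b' (QuotientGroup.mk c') (QuotientGroup.mk d)
    rw [hmul_mk, hb_mk, hb_mk, hb_mk]
    apply Subtype.ext
    show (d : G)⁻¹ * ((c : G) * c')⁻¹ * d * ((c : G) * c')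
        = ((d : G)⁻¹ * (c : G)⁻¹ * d * c) * ((d : G)⁻¹ * (c' : G)⁻¹ * d * c')
    exact comm_add_left V hV hW c.2 c'.2 d.2
  have hbr : ∀ h k k', b' h (k * k') = b' h k * b' h k' := by
    intro h k k'
    refine Quotient.inductionOn₃' h k k' ?_
    intro c d d'
    show b' (QuotientGroup.mk c) ((QuotientGroup.mk d : Cg ⧸ N) * QuotientGroup.mk d')
        = b' (QuotientGroup.mk c) (QuotientGroup.mk d)
          * b' (QuotientGroup.mk c) (QuotientGroup.mk d')
    rw [hmul_mk, hb_mk, hb_mk, hb_mk]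
    apply Subtype.ext
    show ((d : G) * d')⁻¹ * (c : G)⁻¹ * ((d : G) * d') * c
        = ((d : G)⁻¹ * (c : G)⁻¹ * d * c) * ((d' : G)⁻¹ * (c : G)⁻¹ * d' * c)
    exact comm_add_right V hV hW c.2 d.2 d'.2
  have haniso : ∀ h, q h = 1 → h = 1 := by
    intro h
    refine Quotient.inductionOn' h ?_
    intro c hc1
    have hc1' : q (QuotientGroup.mk c) = 1 := hc1
    rw [hq_mk] at hc1'
    have hc1 := hc1'
    have hsq : (c : G) * c = 1 := Subtype.ext_iff.mp hc1
    have hcV : (c : G) ∈ V := sq_one_mem_V V hV hmax c.2 hsq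
    show (QuotientGroup.mk c : Cg ⧸ N) = 1
    rw [QuotientGroup.eq_one_iff]
    exact Subgroup.mem_subgroupOf.mpr hcV
  exact key hH hZ hZc q b' hq hbl hbr haniso hrC hnZ
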